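/- Let R be a Noetherian ring of prime characteristic p such that the Frobenius endomorphism F : R → R, x ↦ x^p, is flat. Then R is reduced. -/

import Mathlib

open Finset in
/-- If `f : R →+* S` is flat and `f a = 0`, then `1 ∈ S` can be written as
`∑ f (b j) * y j` with `a * b j = 0` for all `j`. -/
lemma flat_aux {R S : Type u} [CommRing R] [CommRing S] (f : R →+* S)
    (hf : f.Flat) (a : R) (ha : f a = 0) :
    ∃ (κ : Type u) (_ : Fintype κ) (b : κ → R) (y : κ → S),
      (1 : S) = ∑ j, f (b j) * y j ∧ ∀ j, a * b j = 0 := by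
  letI := f.toAlgebra
  haveI : Module.Flat R S := hf
  have h : ∑ _i : PUnit.{u+1}, a • (1 : S) = 0 := by
    simp [Algebra.smul_def, RingHom.algebraMap_toAlgebra, ha]
  obtain ⟨k, A, y, h1, h2⟩ := Module.Flat.isTrivialRelation_of_sum_smul_eq_zero (M := S) (ι := PUnit.{u+1})
    (f := fun _ : PUnit.{u+1} => a) (x := fun _ => (1 : S)) h
  refine ⟨ULift.{u} (Fin k), inferInstance, fun j => A PUnit.unit j.down, fun j => y j.down, ?_,
    fun j => by simpa using h2 j.down⟩
  refine Eq.trans ?_ (Fintype.sum_equiv Equiv.ulift _ (fun j => f (A PUnit.unit j) * y j) (fun _ => rfl)).symm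
  simpa [Algebra.smul_def, RingHom.algebraMap_toAlgebra] using h1 PUnit.unit

/-- Let `R` be a Noetherian ring of prime characteristic `p` such that the
Frobenius endomorphism `F : R → R`, `x ↦ x^p`, is flat.  Then `R` is reduced. -/
theorem reduced_of_frobenius_flat
    (R : Type*) [CommRing R] [IsNoetherianRing R]
    (p : ℕ) [Fact p.Prime] [CharP R p]
    (hflat : (frobenius R p).Flat) :
    IsReduced R := by
  have hp : 1 < p := (Fact.out : p.Prime).one_lt
  -- key step: `x ^ p = 0 → x = 0`
  have key : ∀ x : R, x ^ p = 0 → x = 0 := by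
    intro x hx
    have hfx : frobenius R p x = 0 := by simpa [frobenius_def] using hx
    obtain ⟨κ, _, b, y, h1, h2⟩ := flat_aux (frobenius R p) hflat x hfx
    calc x = x * 1 := (mul_one x).symm
    _ = ∑ j, x * (b j ^ p * y j) := by
        rw [h1, Finset.mul_sum]; simp [frobenius_def]
    _ = ∑ j, (x * b j) * (b j ^ (p - 1) * y j) := by
        apply Finset.sum_congr rfl
        intro j _
        have : b j ^ p = b j * b j ^ (p - 1) := by
          rw [← pow_succ']
          congr 1
          omega
        rw [this]; ring
    _ = 0 := by simp [h2]
  have keyIter : ∀ (k : ℕ) (x : R), x ^ p ^ k = 0 → x = 0 := by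
    intro k
    induction k with
    | zero => intro x hx; simpa using hx
    | succ k ih =>
      intro x hx
      apply key
      apply ih
      rw [← pow_mul, ← pow_succ']
      exact hx
  constructor
  rintro x ⟨n, hn⟩
  rcases Nat.eq_zero_or_pos n with rfl | hnpos
  · have : (1 : R) = 0 := by simpa using hn
    calc x = x * 1 := (mul_one x).symm
    _ = 0 := by rw [this, mul_zero]
  · apply keyIter n
    have hle : n ≤ p ^ n := le_of_lt (Nat.lt_pow_self (n := n) hp)
    calc x ^ p ^ n = x ^ n * x ^ (p ^ n - n) := by rw [← pow_add]; congr 1; omega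
    _ = 0 := by rw [hn, zero_mul]
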